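/- Let X be a Tychonoff (completely regular Hausdorff) space and let D be a closed discrete subset of X. Then for every f ∈ C(X) and every neighborhood basis B of f in the graph topology τ_Γ, the cardinality of D is at most the cardinality of B. In particular, the character of the space (C(X), τ_Γ) is at least |D|. -/

import Mathlib

open TopologicalSpace Set

/-- The graph of a continuous map, as a subset of `X × Y`. -/
def graphSet {X Y : Type*} [TopologicalSpace X] [TopologicalSpace Y] (f : C(X, Y)) :
    Set (X × Y) := {p | p.2 = f p.1}

/-- The graph topology `τ_Γ` on `C(X, Y)`, generated by the sets
`F_G = {f | graph f ⊆ G}` for `G` open in `X × Y`. -/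
def graphTopology (X Y : Type*) [TopologicalSpace X] [TopologicalSpace Y] :
    TopologicalSpace C(X, Y) :=
  generateFrom {S | ∃ G : Set (X × Y), IsOpen G ∧ S = {f : C(X, Y) | graphSet f ⊆ G}}

lemma graphSet_subset_iff {X Y : Type*} [TopologicalSpace X] [TopologicalSpace Y]
    (f : C(X, Y)) (G : Set (X × Y)) : graphSet f ⊆ G ↔ ∀ x, (x, f x) ∈ G := by
  constructor
  · intro h x; exact h rfl
  · rintro h ⟨x, y⟩ hp
    have : y = f x := hp
    subst this; exact h x

lemma keyA {X : Type*} [TopologicalSpace X] {O : Set C(X, ℝ)}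
    (hO : TopologicalSpace.GenerateOpen
      {S | ∃ G : Set (X × ℝ), IsOpen G ∧ S = {f : C(X, ℝ) | graphSet f ⊆ G}} O) :
    ∀ f ∈ O, ∃ G : Set (X × ℝ), IsOpen G ∧ graphSet f ⊆ G ∧
      {g : C(X, ℝ) | graphSet g ⊆ G} ⊆ O := by
  induction hO with
  | basic S hS =>
    rintro f hf
    obtain ⟨G, hG, rfl⟩ := hS
    exact ⟨G, hG, hf, subset_rfl⟩
  | univ => intro f _; exact ⟨univ, isOpen_univ, subset_univ _, subset_univ _⟩
  | inter O₁ O₂ h₁ h₂ ih₁ ih₂ =>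
    intro f hf
    obtain ⟨G₁, hG₁, hf₁, hs₁⟩ := ih₁ f hf.1
    obtain ⟨G₂, hG₂, hf₂, hs₂⟩ := ih₂ f hf.2
    exact ⟨G₁ ∩ G₂, hG₁.inter hG₂, subset_inter hf₁ hf₂,
      fun g hg => ⟨hs₁ fun p hp => (hg hp).1, hs₂ fun p hp => (hg hp).2⟩⟩
  | sUnion 𝒮 h ih =>
    intro f hf
    obtain ⟨O', hO', hfO'⟩ := hf
    obtain ⟨G, hG, hfG, hs⟩ := ih O' hO' f hfO'
    exact ⟨G, hG, hfG, hs.trans (subset_sUnion_of_mem hO')⟩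

lemma mem_nhds_graphTopology {X : Type*} [TopologicalSpace X] {f : C(X, ℝ)}
    {S : Set C(X, ℝ)} (hS : S ∈ @nhds C(X, ℝ) (graphTopology X ℝ) f) :
    ∃ G : Set (X × ℝ), IsOpen G ∧ graphSet f ⊆ G ∧
      {g : C(X, ℝ) | graphSet g ⊆ G} ⊆ S := by
  obtain ⟨t, hts, ht, hft⟩ := (@mem_nhds_iff _ (graphTopology X ℝ) _ _).mp hS
  obtain ⟨G, hG, hfG, hsub⟩ := keyA ht f hft
  exact ⟨G, hG, hfG, hsub.trans hts⟩

/-- bump construction -/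
lemma bump {X : Type*} [TopologicalSpace X] [T35Space X] (f : C(X, ℝ))
    (G : Set (X × ℝ)) (hG : IsOpen G) (hfG : graphSet f ⊆ G) (d : X) :
    ∃ δ : ℝ, ∃ g : C(X, ℝ), 0 < δ ∧ graphSet g ⊆ G ∧ g d = f d + δ := by
  have hdG : (d, f d) ∈ G := hfG rfl
  obtain ⟨U, V, hU, hV, hdU, hfV, hUV⟩ := isOpen_prod_iff.mp hG d (f d) hdG
  obtain ⟨ε, hε, hball⟩ := Metric.isOpen_iff.mp hV (f d) hfV
  set U' : Set X := U ∩ f ⁻¹' (Metric.ball (f d) (ε / 4)) with hU'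
  have hU'open : IsOpen U' := hU.inter ((Metric.isOpen_ball).preimage f.continuous)
  have hdU' : d ∈ U' := ⟨hdU, by simp [hε]⟩
  obtain ⟨φ, hφc, hφd, hφK⟩ := CompletelyRegularSpace.completely_regular d U'ᶜ
    hU'open.isClosed_compl (by simpa using hdU')
  set ψ : C(X, ℝ) := ⟨fun x => 1 - (φ x : ℝ), by fun_prop⟩ with hψ
  refine ⟨ε / 2, f + (ε / 2) • ψ, by linarith, ?_, ?_⟩
  · rw [graphSet_subset_iff]
    intro x
    by_cases hx : x ∈ U'
    · apply hUV
      refine ⟨hx.1, hball ?_⟩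
      have hb1 : dist (f x) (f d) < ε / 4 := hx.2
      have hφ01 : (0:ℝ) ≤ (φ x : ℝ) ∧ (φ x : ℝ) ≤ 1 := ⟨(φ x).2.1, (φ x).2.2⟩
      simp only [hψ, ContinuousMap.add_apply, ContinuousMap.smul_apply,
        ContinuousMap.coe_mk, smul_eq_mul]
      rw [Metric.mem_ball, Real.dist_eq, abs_lt]
      rw [Real.dist_eq, abs_lt] at hb1
      constructor <;> nlinarith [hφ01.1, hφ01.2]
    · have : φ x = 1 := hφK hx
      have : (f + (ε / 2) • ψ) x = f x := by
        simp [hψ, this]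
      rw [this]
      exact hfG rfl
  · have : (φ d : ℝ) = 0 := by rw [hφd]; rfl
    simp [hψ, this]

theorem card_le_card_nhds_basis (X : Type*) [TopologicalSpace X] [T35Space X]
    (D : Set X) (hDclosed : IsClosed D) (hDdiscrete : DiscreteTopology ↥D)
    (f : C(X, ℝ)) (B : Set (Set C(X, ℝ)))
    (hBnhds : ∀ S ∈ B, S ∈ @nhds C(X, ℝ) (graphTopology X ℝ) f)
    (hBbasis : ∀ S ∈ @nhds C(X, ℝ) (graphTopology X ℝ) f, ∃ T ∈ B, T ⊆ S) :
    Cardinal.mk ↥D ≤ Cardinal.mk ↥B := by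
  by_contra hlt
  rw [not_le] at hlt
  obtain ⟨e⟩ := (Cardinal.le_def _ _).mp hlt.le
  -- for each S : B, produce δ and g
  have H : ∀ S : ↥B, ∃ δ : ℝ, ∃ g : C(X, ℝ), 0 < δ ∧ g ∈ (S : Set C(X, ℝ)) ∧
      g (e S : X) = f (e S : X) + δ := by
    intro S
    obtain ⟨G, hG, hfG, hsub⟩ := mem_nhds_graphTopology (hBnhds S.1 S.2)
    obtain ⟨δ, g, hδ, hgG, hgd⟩ := bump f G hG hfG (e S : X)
    exact ⟨δ, g, hδ, hsub hgG, hgd⟩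
  choose δ g hδ hg hgd using H
  set E : Set (X × ℝ) := range (fun S : ↥B => ((e S : X), f (e S : X) + δ S)) with hE
  -- E is closed
  have hEclosed : IsClosed E := by
    rw [← isOpen_compl_iff]
    rw [isOpen_iff_forall_mem_open]
    rintro ⟨x, t⟩ hp
    by_cases hx : x ∈ D
    · -- get open U with U ∩ D ⊆ {x}
      have : IsOpen ({(⟨x, hx⟩ : ↥D)} : Set ↥D) := isOpen_discrete _
      obtain ⟨U, hU, hUeq⟩ := isOpen_induced_iff.mp this
      have hxU : x ∈ U := by
        have : (⟨x, hx⟩ : ↥D) ∈ (Subtype.val ⁻¹' U : Set ↥D) := by rw [hUeq]; rfl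
        exact this
      have hUD : ∀ d' ∈ D, d' ∈ U → d' = x := by
        intro d' hd' hd'U
        have : (⟨d', hd'⟩ : ↥D) ∈ (Subtype.val ⁻¹' U : Set ↥D) := hd'U
        rw [hUeq] at this
        exact congrArg Subtype.val this
      by_cases hex : ∃ S₀ : ↥B, (e S₀ : X) = x
      · obtain ⟨S₀, hS₀⟩ := hex
        refine ⟨U ×ˢ ({f x + δ S₀}ᶜ), ?_, hU.prod (isClosed_singleton.isOpen_compl), ?_⟩
        · rintro ⟨x', t'⟩ ⟨hx'U, ht'⟩ ⟨S, hS⟩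
          have hx'1 : (e S : X) = x' := congrArg Prod.fst hS
          have ht'1 : f (e S : X) + δ S = t' := congrArg Prod.snd hS
          have hx'x : x' = x := hUD x' (hx'1 ▸ (e S).2) (by rwa [← hx'1] at hx'U ⊢)
          have : S = S₀ := e.injective (Subtype.ext (by rw [hS₀, hx'1, hx'x]))
          apply ht'
          rw [← ht'1, this, hS₀, hx'x]
          rfl
        · refine ⟨hxU, ?_⟩
          intro ht
          apply hp
          have : t = f x + δ S₀ := ht
          refine ⟨S₀, ?_⟩
          show (↑(e S₀), f ↑(e S₀) + δ S₀) = (x, t)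
          rw [hS₀, this]
      · refine ⟨U ×ˢ univ, ?_, hU.prod isOpen_univ, ⟨hxU, trivial⟩⟩
        rintro ⟨x', t'⟩ ⟨hx'U, -⟩ ⟨S, hS⟩
        have hx'1 : (e S : X) = x' := congrArg Prod.fst hS
        exact hex ⟨S, by rw [hx'1, hUD x' (hx'1 ▸ (e S).2) (by rwa [← hx'1] at hx'U ⊢)]⟩
    · refine ⟨Dᶜ ×ˢ univ, ?_, (hDclosed.isOpen_compl).prod isOpen_univ, ⟨hx, trivial⟩⟩
      rintro ⟨x', t'⟩ ⟨hx'U, -⟩ ⟨S, hS⟩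
      exact hx'U ((congrArg Prod.fst hS : (e S : X) = x') ▸ (e S).2)
  -- graph f ⊆ Eᶜ
  have hfE : graphSet f ⊆ Eᶜ := by
    rw [graphSet_subset_iff]
    rintro x ⟨S, hS⟩
    have h1 : (e S : X) = x := congrArg Prod.fst hS
    have h2 : f (e S : X) + δ S = f x := congrArg Prod.snd hS
    rw [h1] at h2
    linarith [hδ S]
  -- F := F_{Eᶜ} is a nhds of f
  have hFopen : @IsOpen C(X, ℝ) (graphTopology X ℝ) {g : C(X, ℝ) | graphSet g ⊆ Eᶜ} :=
    TopologicalSpace.GenerateOpen.basic _ ⟨Eᶜ, hEclosed.isOpen_compl, rfl⟩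
  have hFnhds : {g : C(X, ℝ) | graphSet g ⊆ Eᶜ} ∈ @nhds C(X, ℝ) (graphTopology X ℝ) f :=
    (@mem_nhds_iff _ (graphTopology X ℝ) _ _).mpr ⟨_, subset_rfl, hFopen, hfE⟩
  obtain ⟨T, hTB, hTsub⟩ := hBbasis _ hFnhds
  have hgF := hTsub (hg ⟨T, hTB⟩)
  apply hgF (show ((e ⟨T, hTB⟩ : X), g ⟨T, hTB⟩ (e ⟨T, hTB⟩ : X)) ∈ graphSet (g ⟨T, hTB⟩) from rfl)
  rw [hgd ⟨T, hTB⟩]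
  exact ⟨⟨T, hTB⟩, rfl⟩
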